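/- The set A = {a : a is a finite Borel measure on X, a(B) ∈ ℕ for every Borel set B ⊆ X, and a(X) ≤ α} is closed in the weak topology on finite Borel measures: if a net (a_i) of elements of A converges weakly to a finite Borel measure a (i.e., ∫ f da_i → ∫ f da for every bounded continuous f : X → ℝ), then a ∈ A. -/

import Mathlib

open MeasureTheory

open Filter Metric
open scoped ENNReal NNReal

lemma exists_nat_eq_of_enn (α : ℕ) {c : ℝ≥0∞} (hc : c ≤ α)
    (h : ∀ n : ℕ, (n : ℝ≥0∞) < c → (n : ℝ≥0∞) + 1 ≤ c) : ∃ n : ℕ, c = n := by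
  have hct : c ≠ ⊤ := (hc.trans_lt (ENNReal.natCast_lt_top α)).ne
  refine ⟨⌊c.toReal⌋₊, ?_⟩
  by_contra hne
  have h1 : ((⌊c.toReal⌋₊ : ℕ) : ℝ≥0∞) ≤ c := by
    conv_rhs => rw [← ENNReal.ofReal_toReal hct]
    rw [← ENNReal.ofReal_natCast]
    exact ENNReal.ofReal_le_ofReal (Nat.floor_le ENNReal.toReal_nonneg)
  have h2 : ((⌊c.toReal⌋₊ : ℕ) : ℝ≥0∞) < c := h1.lt_of_ne (fun h' => hne h'.symm)
  have h3 := h _ h2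
  have h4 : ((⌊c.toReal⌋₊ : ℝ) + 1) ≤ c.toReal := by
    have := ENNReal.toReal_mono hct h3
    rw [ENNReal.toReal_add (by simp) (by simp)] at this
    simpa using this
  exact absurd h4 (not_le.mpr (Nat.lt_floor_add_one _))

/-- Let `(X,d)` be a compact metric space and `α` a positive integer.
The set of finite integer-valued Borel measures `a` on `X` with `a(X) ≤ α` is closed
under weak convergence of nets: if a net `(a_i)` of such measures converges weakly to a
finite Borel measure `a` (i.e. `∫ f da_i → ∫ f da` for every bounded continuous
`f : X → ℝ`), then `a` is integer-valued and `a(X) ≤ α`. -/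
theorem stmt6 {X : Type*} [MetricSpace X] [CompactSpace X]
    [MeasurableSpace X] [BorelSpace X]
    (α : ℕ) (hα : 0 < α)
    {ι : Type*} (F : Filter ι) [F.NeBot]
    (aNet : ι → Measure X)
    (haFin : ∀ i, IsFiniteMeasure (aNet i))
    (haInt : ∀ i, ∀ B : Set X, MeasurableSet B → ∃ n : ℕ, aNet i B = n)
    (haBdd : ∀ i, aNet i Set.univ ≤ α)
    (a : Measure X) (hfin : IsFiniteMeasure a)
    (hconv : ∀ f : X → ℝ, Continuous f → (∃ C : ℝ, ∀ x, |f x| ≤ C) →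
      Filter.Tendsto (fun i => ∫ x, f x ∂(aNet i)) F (nhds (∫ x, f x ∂a))) :
    (∀ B : Set X, MeasurableSet B → ∃ n : ℕ, a B = n) ∧ a Set.univ ≤ α := by
  -- package everything as `FiniteMeasure`s
  set μs : ι → FiniteMeasure X := fun i => ⟨aNet i, haFin i⟩ with hμs
  set μ : FiniteMeasure X := ⟨a, hfin⟩ with hμ
  have h_tend : Tendsto μs F (nhds μ) := by
    rw [FiniteMeasure.tendsto_iff_forall_integral_tendsto]
    intro f
    exact hconv f f.continuous ⟨‖f‖, fun x => by
      simpa [Real.norm_eq_abs] using f.norm_coe_le_norm x⟩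
  -- total mass bound
  have hmass : a Set.univ ≤ α := by
    have h1 := hconv (fun _ => 1) continuous_const ⟨1, fun x => by norm_num⟩
    simp only [integral_const, smul_eq_mul, mul_one] at h1
    have h2 : (a Set.univ).toReal ≤ (α : ℝ) := by
      refine le_of_tendsto h1 (Eventually.of_forall fun i => ?_)
      have := ENNReal.toReal_mono (ENNReal.natCast_ne_top α) (haBdd i)
      simpa [measureReal_def] using this
    rw [← ENNReal.toReal_le_toReal (measure_ne_top a _) (ENNReal.natCast_ne_top α)]
    simpa using h2
  refine ⟨?_, hmass⟩
  -- liminfs of measures of thickenings are naturals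
  have hLnat : ∀ r : ℝ, ∀ K : Set X,
      ∃ n : ℕ, F.liminf (fun i => aNet i (thickening r K)) = n := by
    intro r K
    apply exists_nat_eq_of_enn α
    · exact le_trans
        (liminf_le_liminf (Eventually.of_forall fun i =>
          le_trans (measure_mono (Set.subset_univ _)) (haBdd i)))
        (le_of_eq (liminf_const _))
    · intro n hn
      have hev := Filter.eventually_lt_of_lt_liminf hn
      refine le_liminf_of_le (by isBoundedDefault) (hev.mono fun i hi => ?_)
      obtain ⟨m, hm⟩ := haInt i _ isOpen_thickening.measurableSet
      rw [hm] at hi ⊢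
      have hnm : n < m := by exact_mod_cast hi
      calc (n : ℝ≥0∞) + 1 = ((n + 1 : ℕ) : ℝ≥0∞) := by push_cast; ring
        _ ≤ (m : ℝ≥0∞) := by exact_mod_cast hnm
  -- closed sets have natural measure
  have hclosed : ∀ K : Set X, IsClosed K → ∃ n : ℕ, a K = n := by
    intro K hK
    set L : ℝ → ℝ≥0∞ := fun r => F.liminf (fun i => aNet i (thickening r K)) with hL
    set c : ℝ≥0∞ := ⨅ m : ℕ, L (1 / (m + 1)) with hc
    -- upper bound : a K ≤ L δ for any δ > 0, via thickened indicators
    have hupper : ∀ δ : ℝ, 0 < δ → a K ≤ L δ := by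
      intro δ hδ
      have key := FiniteMeasure.tendsto_iff_forall_lintegral_tendsto.mp h_tend
        (thickenedIndicator hδ K)
      have h1 : a K ≤ ∫⁻ x, (thickenedIndicator hδ K x : ℝ≥0∞) ∂a := by
        rw [← lintegral_indicator_one hK.measurableSet]
        apply lintegral_mono
        intro x
        by_cases hx : x ∈ K
        · simp [hx, thickenedIndicator_one hδ K hx]
        · simp [hx]
      have h2 : ∀ i, (∫⁻ x, (thickenedIndicator hδ K x : ℝ≥0∞) ∂(aNet i))
          ≤ aNet i (thickening δ K) := by
        intro i
        rw [← lintegral_indicator_one isOpen_thickening.measurableSet]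
        apply lintegral_mono
        intro x
        by_cases hx : x ∈ thickening δ K
        · simpa [hx] using (ENNReal.coe_le_coe.mpr (thickenedIndicator_le_one hδ K x))
        · simp [hx, thickenedIndicator_zero hδ K hx]
      have h3 : (∫⁻ x, (thickenedIndicator hδ K x : ℝ≥0∞) ∂a) ≤ L δ :=
        le_trans (le_of_eq key.liminf_eq.symm)
          (liminf_le_liminf (Eventually.of_forall h2))
      exact h1.trans h3
    -- lower bound : c ≤ a K, via the portmanteau limsup inequality for closed sets
    have hlower : c ≤ a K := by
      have hr : Tendsto (fun m : ℕ => (1 : ℝ) / (m + 1)) atTop (nhds 0) :=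
        tendsto_one_div_add_atTop_nhds_zero_nat
      have htc : Tendsto (fun m : ℕ => a (cthickening (1 / (m + 1)) K)) atTop
          (nhds (a K)) := by
        have := tendsto_measure_cthickening_of_isClosed
          (μ := a) (s := K) ⟨1, one_pos, measure_ne_top a _⟩ hK
        exact this.comp hr
      refine ge_of_tendsto htc (Eventually.of_forall fun m => ?_)
      calc c ≤ L (1 / (m + 1)) := iInf_le _ m
        _ ≤ F.limsup (fun i => aNet i (thickening (1 / (m + 1)) K)) :=
            liminf_le_limsup
        _ ≤ F.limsup (fun i => aNet i (cthickening (1 / (m + 1)) K)) :=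
            limsup_le_limsup (Eventually.of_forall fun i =>
              measure_mono (thickening_subset_cthickening _ _))
        _ ≤ a (cthickening (1 / (m + 1)) K) :=
            FiniteMeasure.limsup_measure_closed_le_of_tendsto h_tend
              (isClosed_cthickening)
    have hub : a K ≤ c := le_iInf fun m => hupper _ (by positivity)
    have hKc : a K = c := le_antisymm hub hlower
    rw [hKc, hc]
    -- c is a natural
    apply exists_nat_eq_of_enn α
    · refine (iInf_le _ 0).trans ?_
      exact le_trans
        (liminf_le_liminf (Eventually.of_forall fun i =>
          le_trans (measure_mono (Set.subset_univ _)) (haBdd i)))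
        (le_of_eq (liminf_const _))
    · intro n hn
      refine le_iInf fun m => ?_
      have hm : (n : ℝ≥0∞) < L (1 / (m + 1)) := lt_of_lt_of_le hn (iInf_le _ m)
      obtain ⟨k, hk⟩ := hLnat (1 / (m + 1)) K
      have hk' : L (1 / (m + 1)) = (k : ℝ≥0∞) := hk
      rw [hk'] at hm ⊢
      have hnk : n < k := by exact_mod_cast hm
      calc (n : ℝ≥0∞) + 1 = ((n + 1 : ℕ) : ℝ≥0∞) := by push_cast; ring
        _ ≤ (k : ℝ≥0∞) := by exact_mod_cast hnk
  -- general Borel sets by inner regularity with closed sets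
  intro B hB
  apply exists_nat_eq_of_enn α
  · exact le_trans (measure_mono (Set.subset_univ _)) hmass
  · intro n hn
    obtain ⟨K, hKB, hKclosed, hKlt⟩ :=
      hB.exists_lt_isClosed_of_ne_top (measure_ne_top a B) hn
    obtain ⟨k, hk⟩ := hclosed K hKclosed
    rw [hk] at hKlt
    have hnk : n < k := by exact_mod_cast hKlt
    calc (n : ℝ≥0∞) + 1 = ((n + 1 : ℕ) : ℝ≥0∞) := by push_cast; ring
      _ ≤ (k : ℝ≥0∞) := by exact_mod_cast hnk
      _ = a K := hk.symm
      _ ≤ a B := measure_mono hKB
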